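/- arXiv:1907.08812 — 2 statements merged into one kernel-verified Lean document; each statement's English description precedes it below -/
import Mathlib

section
/- Let s⃗ = (s₁,…,s_d) ∈ (0,∞)^d satisfy Σ_{j=1}^d 1/s_j < 2. If f ∈ H^{s⃗}(𝕋^d), then the Fourier coefficients of f are absolutely summable, i.e. Σ_{k∈ℤ^d} |f̂(k)| < ∞; in particular f has a continuous representative. -/
open MeasureTheory Complex Filter
open scoped ENNReal Topology

noncomputable section

/-- The fundamental domain `[-1/2, 1/2)^d` of the torus `𝕋^d = ℝ^d/ℤ^d`. -/
def Tcube (d : ℕ) : Set (Fin d → ℝ) := Set.univ.pi fun _ => Set.Ico (-(1/2) : ℝ) (1/2)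

/-- The (Lebesgue/Haar) measure of the torus `𝕋^d`, realized on the fundamental domain. -/
def μT (d : ℕ) : Measure (Fin d → ℝ) := volume.restrict (Tcube d)

/-- The Euclidean norm on `ℝ^d`. -/
def eunorm {d : ℕ} (x : Fin d → ℝ) : ℝ := Real.sqrt (∑ j, (x j) ^ 2)

/-- `ℤ^d`-periodicity: a function on `ℝ^d` represents a function on the torus `𝕋^d`. -/
def ZPeriodic {d : ℕ} (f : (Fin d → ℝ) → ℂ) : Prop :=
  ∀ (x : Fin d → ℝ) (m : Fin d → ℤ), f (x + fun j => (m j : ℝ)) = f x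

/-- The `k`-th Fourier coefficient of a function on the torus `𝕋^d`. -/
def fourierCoefT {d : ℕ} (f : (Fin d → ℝ) → ℂ) (k : Fin d → ℤ) : ℂ :=
  ∫ x in Tcube d, f x * Complex.exp (-(2 * Real.pi * Complex.I) * (∑ j, (k j : ℂ) * (x j : ℂ)))

/-- `u` is a `(2,q)`-Fourier multiplier on `𝕋^d`: there is `C > 0` such that for every
`f ∈ L²(𝕋^d)` with `u·f ∈ L²(𝕋^d)` one has `‖(widehat{u·f}(k))_k‖_{ℓ^q(ℤ^d)} ≤ C ‖f‖_{L²(𝕋^d)}`;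
equivalently, the operator `a ↦ 𝓕(u 𝓕⁻¹ a)` is bounded from `ℓ²(ℤ^d)` to `ℓ^q(ℤ^d)`. -/
def IsMultiplier (d : ℕ) (q : ℝ≥0∞) (u : (Fin d → ℝ) → ℂ) : Prop :=
  ∃ C : ℝ, 0 < C ∧ ∀ f : (Fin d → ℝ) → ℂ, MemLp f 2 (μT d) →
    MemLp (fun x => u x * f x) 2 (μT d) →
    eLpNorm (fun k : Fin d → ℤ => fourierCoefT (fun x => u x * f x) k) q
        (Measure.count : Measure (Fin d → ℤ)) ≤
      ENNReal.ofReal C * eLpNorm f 2 (μT d)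

/-- Membership in the Sobolev space `W^{s,2}(𝕋^d) = H^s(𝕋^d)`:
`f ∈ L²(𝕋^d)` and `∑_{k ∈ ℤ^d} |k|^{2s} |f̂(k)|² < ∞`. -/
def MemHs (d : ℕ) (s : ℝ) (f : (Fin d → ℝ) → ℂ) : Prop :=
  MemLp f 2 (μT d) ∧
    Summable (fun k : Fin d → ℤ =>
      eunorm (fun j => (k j : ℝ)) ^ (2 * s) * ‖fourierCoefT f k‖ ^ 2)

/-- `w` has a continuous (periodic) representative and this representative has a zero. -/
def HasZeroContRep (d : ℕ) (w : (Fin d → ℝ) → ℂ) : Prop :=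
  ∃ w₀ : (Fin d → ℝ) → ℂ, Continuous w₀ ∧ ZPeriodic w₀ ∧ w =ᵐ[μT d] w₀ ∧ ∃ x, w₀ x = 0

/-- Membership in the anisotropic Bessel potential space `H^{s⃗}(𝕋^d)`:
`f ∈ L²(𝕋^d)` and `∑_{k ∈ ℤ^d} (|k₁|^{2s₁} + ⋯ + |k_d|^{2s_d}) |f̂(k)|² < ∞`. -/
def MemHvec (d : ℕ) (sv : Fin d → ℝ) (f : (Fin d → ℝ) → ℂ) : Prop :=
  MemLp f 2 (μT d) ∧
    Summable (fun k : Fin d → ℤ =>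
      (∑ j, |(k j : ℝ)| ^ (2 * sv j)) * ‖fourierCoefT f k‖ ^ 2)

namespace Aux

instance : Fact ((0:ℝ) < 1) := ⟨one_pos⟩

lemma half_eq : (-(1/2 : ℝ) + 1) = 1/2 := by norm_num

lemma measurableSet_Tcube (d : ℕ) : MeasurableSet (Tcube d) :=
  MeasurableSet.univ_pi fun _ => measurableSet_Ico

lemma muT_eq_pi (d : ℕ) :
    μT d = Measure.pi (fun _ : Fin d => volume.restrict (Set.Ioc (-(1/2):ℝ) (-(1/2)+1))) := by
  refine (Measure.pi_eq fun s hs => ?_).symm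
  rw [μT, Measure.restrict_apply (MeasurableSet.univ_pi hs), Tcube,
    ← Set.pi_inter_distrib, volume_pi_pi]
  refine Finset.prod_congr rfl fun i _ => ?_
  rw [Measure.restrict_apply (hs i)]
  refine measure_congr (MeasureTheory.ae_eq_set_inter (Filter.EventuallyEq.refl _ _) ?_)
  rw [half_eq]
  exact (Ico_ae_eq_Ioc (μ := volume) (a := -(1/2:ℝ)) (b := 1/2))

abbrev G (d : ℕ) : Type := Fin d → AddCircle (1:ℝ)

def tmap (d : ℕ) : (Fin d → ℝ) → G d := fun x j => (x j : AddCircle (1:ℝ))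

lemma measurePreserving_tmap (d : ℕ) :
    MeasurePreserving (tmap d) (μT d) (volume : Measure (G d)) := by
  rw [muT_eq_pi, volume_pi]
  exact measurePreserving_pi _ _ (fun _ => AddCircle.measurePreserving_mk 1 (-(1/2)))

instance : IsProbabilityMeasure (volume : Measure (AddCircle (1:ℝ))) := by
  constructor
  rw [AddCircle.measure_univ]; norm_num

instance (d : ℕ) : IsProbabilityMeasure (volume : Measure (G d)) := by
  rw [volume_pi]; infer_instance

end Aux
namespace Aux

open Submodule Set ContinuousMap Algebra
open scoped ComplexConjugate

def chi {d : ℕ} (k : Fin d → ℤ) : C(G d, ℂ) :=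
  ∏ j, (fourier (k j)).comp ⟨fun g => g j, continuous_apply j⟩

lemma chi_apply {d : ℕ} (k : Fin d → ℤ) (x : G d) : chi k x = ∏ j, fourier (k j) (x j) := by
  simp [chi]

lemma chi_zero {d : ℕ} : chi (0 : Fin d → ℤ) = 1 := by
  ext x
  simp [chi_apply, fourier_zero]

lemma chi_add {d : ℕ} (k l : Fin d → ℤ) : chi (k + l) = chi k * chi l := by
  ext x
  simp only [chi_apply, ContinuousMap.mul_apply, ← Finset.prod_mul_distrib]
  exact Finset.prod_congr rfl fun j _ => by simpa using fourier_add (m := k j) (n := l j) (x := x j)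

lemma chi_neg {d : ℕ} (k : Fin d → ℤ) (x : G d) : chi (-k) x = conj (chi k x) := by
  simp only [chi_apply, map_prod]
  exact Finset.prod_congr rfl fun j _ => by simpa using fourier_neg (n := k j) (x := x j)

/-- The star subalgebra generated by the characters. -/
def chiSubalgebra (d : ℕ) : StarSubalgebra ℂ C(G d, ℂ) where
  toSubalgebra := Algebra.adjoin ℂ (Set.range chi)
  star_mem' := by
    show Algebra.adjoin ℂ (Set.range (chi (d := d))) ≤
      star (Algebra.adjoin ℂ (Set.range (chi (d := d))))
    refine adjoin_le ?_
    rintro - ⟨n, rfl⟩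
    refine subset_adjoin ⟨-n, ?_⟩
    ext1 x
    show chi (-n) x = conj (chi n x)
    exact chi_neg n x

lemma chiSubalgebra_coe (d : ℕ) :
    Subalgebra.toSubmodule (chiSubalgebra d).toSubalgebra = span ℂ (Set.range (chi (d := d))) := by
  apply adjoin_eq_span_of_subset
  refine Subset.trans ?_ Submodule.subset_span
  intro x hx
  refine Submonoid.closure_induction (fun _ => id) ⟨0, ?_⟩ ?_ hx
  · exact chi_zero
  · rintro - - - - ⟨m, rfl⟩ ⟨n, rfl⟩
    exact ⟨m + n, chi_add m n⟩

lemma chiSubalgebra_separatesPoints (d : ℕ) : (chiSubalgebra d).SeparatesPoints := by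
  intro x y hxy
  obtain ⟨j, hj⟩ := Function.ne_iff.mp hxy
  refine ⟨_, ⟨chi (Pi.single j 1), subset_adjoin ⟨Pi.single j 1, rfl⟩, rfl⟩, ?_⟩
  have key : ∀ z : G d, chi (Pi.single j 1) z = fourier 1 (z j) := by
    intro z
    rw [chi_apply]
    rw [Finset.prod_eq_single j (fun i _ hi => by
      rw [Pi.single_eq_of_ne hi]; exact fourier_zero) (fun h => absurd (Finset.mem_univ j) h)]
    rw [Pi.single_eq_same]
  dsimp only
  rw [key, key, fourier_one, fourier_one]
  contrapose! hj
  rw [Circle.coe_inj] at hj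
  exact AddCircle.injective_toCircle one_ne_zero hj

lemma chiSubalgebra_closure_eq_top (d : ℕ) : (chiSubalgebra d).topologicalClosure = ⊤ :=
  ContinuousMap.starSubalgebra_topologicalClosure_eq_top_of_separatesPoints _
    (chiSubalgebra_separatesPoints d)

lemma span_chi_closure_eq_top (d : ℕ) :
    (span ℂ (Set.range (chi (d := d)))).topologicalClosure = ⊤ := by
  rw [← chiSubalgebra_coe]
  exact congr_arg (Subalgebra.toSubmodule <| StarSubalgebra.toSubalgebra ·)
    (chiSubalgebra_closure_eq_top d)

abbrev chiLp (d : ℕ) (k : Fin d → ℤ) : Lp ℂ 2 (volume : Measure (G d)) :=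
  ContinuousMap.toLp (E := ℂ) 2 volume ℂ (chi k)

lemma span_chiLp_closure_eq_top (d : ℕ) :
    (span ℂ (Set.range (chiLp d))).topologicalClosure = ⊤ := by
  convert (ContinuousMap.toLp_denseRange ℂ (volume : Measure (G d)) (p := 2) ℂ
    (by norm_num)).topologicalClosure_map_submodule (span_chi_closure_eq_top d)
  case e'_3 => rfl
  erw [map_span, Set.range_comp]
  simp only [ContinuousLinearMap.coe_coe]

end Aux
namespace Aux
open Submodule Set ContinuousMap
open scoped ComplexConjugate Real

lemma volume_eq_haar : (volume : Measure (AddCircle (1:ℝ))) = AddCircle.haarAddCircle := by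
  rw [AddCircle.volume_eq_smul_haarAddCircle]
  simp

lemma integral_fourier_one (n : ℤ) :
    ∫ x : AddCircle (1:ℝ), fourier n x = if n = 0 then 1 else 0 := by
  have h := orthonormal_fourier (T := 1)
  rw [orthonormal_iff_ite] at h
  have h0 := h 0 n
  rw [ContinuousMap.inner_toLp (AddCircle.haarAddCircle) (fourier 0) (fourier n)] at h0
  simp only [fourier_zero, map_one, one_mul, mul_one] at h0
  rw [volume_eq_haar, h0]
  simp only [eq_comm]

lemma integral_chi {d : ℕ} (k : Fin d → ℤ) :
    ∫ x : G d, chi k x = if k = 0 then 1 else 0 := by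
  simp_rw [chi_apply]
  rw [volume_pi, MeasureTheory.integral_fintype_prod_eq_prod (ι := Fin d)
    (f := fun j (c : AddCircle (1:ℝ)) => fourier (k j) c)]
  simp_rw [integral_fourier_one]
  by_cases hk : k = 0
  · subst hk; simp
  · rw [if_neg hk]
    obtain ⟨j, hj⟩ := Function.ne_iff.mp hk
    exact Finset.prod_eq_zero (Finset.mem_univ j) (by simp only [Pi.zero_apply] at hj; rw [if_neg hj])

lemma chi_tmap {d : ℕ} (k : Fin d → ℤ) (x : Fin d → ℝ) :
    chi k (tmap d x) = Complex.exp ((2 * Real.pi * Complex.I) * ∑ j, (k j : ℂ) * (x j : ℂ)) := by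
  rw [chi_apply, Finset.mul_sum, Complex.exp_sum]
  refine Finset.prod_congr rfl fun j _ => ?_
  rw [tmap]
  rw [fourier_coe_apply]
  push_cast
  ring_nf

/-- The Fourier coefficient as an integral of `chi (-k) ∘ tmap`. -/
lemma fourierCoefT_eq {d : ℕ} (f : (Fin d → ℝ) → ℂ) (k : Fin d → ℤ) :
    fourierCoefT f k = ∫ x in Tcube d, f x * chi (-k) (tmap d x) := by
  refine setIntegral_congr_fun (measurableSet_Tcube d) fun x _ => ?_
  rw [chi_tmap]
  congr 2
  simp only [Pi.neg_apply, Int.cast_neg, Finset.mul_sum, ← Finset.sum_neg_distrib]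
  exact Finset.sum_congr rfl fun j _ => by ring

end Aux
namespace Aux
open Submodule Set ContinuousMap
open scoped ComplexConjugate Real

def sigma (d : ℕ) : G d → (Fin d → ℝ) :=
  fun g j => ((AddCircle.equivIco 1 (-(1/2)) (g j) : Set.Ico (-(1/2):ℝ) (-(1/2)+1)) : ℝ)

lemma measurable_sigma (d : ℕ) : Measurable (sigma d) := by
  refine measurable_pi_lambda _ fun j => ?_
  exact measurable_subtype_coe.comp
    ((AddCircle.measurableEquivIco 1 (-(1/2))).measurable.comp (measurable_pi_apply j))

lemma tmap_sigma {d : ℕ} (g : G d) : tmap d (sigma d g) = g := by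
  funext j
  exact (AddCircle.equivIco 1 (-(1/2))).symm_apply_apply (g j)

lemma sigma_tmap {d : ℕ} (x : Fin d → ℝ) (hx : x ∈ Tcube d) : sigma d (tmap d x) = x := by
  funext j
  have hxj : x j ∈ Set.Ico (-(1/2):ℝ) (-(1/2)+1) := by
    rw [half_eq]; exact hx j (Set.mem_univ j)
  show ((AddCircle.equivIco 1 (-(1/2)) ((x j : ℝ) : AddCircle (1:ℝ)) :
    Set.Ico (-(1/2):ℝ) (-(1/2)+1)) : ℝ) = x j
  rw [AddCircle.equivIco]
  rw [QuotientAddGroup.equivIcoMod_coe]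
  exact (toIcoMod_eq_self one_pos).mpr hxj

lemma measurePreserving_sigma (d : ℕ) :
    MeasurePreserving (sigma d) (volume : Measure (G d)) (μT d) := by
  refine ⟨measurable_sigma d, ?_⟩
  rw [← (measurePreserving_tmap d).map_eq,
    Measure.map_map (measurable_sigma d) (measurePreserving_tmap d).measurable]
  have : (sigma d) ∘ (tmap d) =ᵐ[μT d] id := by
    rw [μT]
    filter_upwards [ae_restrict_mem (measurableSet_Tcube d)] with x hx
    exact sigma_tmap x hx
  rw [Measure.map_congr this, Measure.map_id]

lemma ae_zero_of_coeff_zero {d : ℕ} {h : (Fin d → ℝ) → ℂ} (hh : MemLp h 2 (μT d))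
    (hz : ∀ k, fourierCoefT h k = 0) : h =ᵐ[μT d] 0 := by
  set H : G d → ℂ := h ∘ sigma d with hHdef
  have hH : MemLp H 2 (volume : Measure (G d)) :=
    hh.comp_measurePreserving (measurePreserving_sigma d)
  set HL := hH.toLp H with hHL
  have hHtm : (fun y => H (tmap d y)) =ᵐ[μT d] h := by
    rw [μT]
    filter_upwards [ae_restrict_mem (measurableSet_Tcube d)] with x hx
    show h (sigma d (tmap d x)) = h x
    rw [sigma_tmap x hx]
  have key : ∀ k : Fin d → ℤ, inner (𝕜 := ℂ) (chiLp d k) HL = 0 := by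
    intro k
    rw [L2.inner_def]
    have e1 : (fun x => inner (𝕜 := ℂ) ((chiLp d k : G d → ℂ) x) ((HL : G d → ℂ) x))
        =ᵐ[volume] fun x => chi (-k) x * H x := by
      filter_upwards [ContinuousMap.coeFn_toLp (E := ℂ) (p := 2)
        (volume : Measure (G d)) (𝕜 := ℂ) (chi k), MemLp.coeFn_toLp hH] with x h1 h2
      rw [RCLike.inner_apply, h1, h2, ← chi_neg, mul_comm]
    rw [integral_congr_ae e1]
    have hF : AEStronglyMeasurable (fun x => chi (-k) x * H x) (volume : Measure (G d)) :=
      (chi (-k)).continuous.aestronglyMeasurable.mul hH.aestronglyMeasurable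
    have e2 : ∫ x, chi (-k) x * H x = ∫ y, chi (-k) (tmap d y) * H (tmap d y) ∂(μT d) := by
      rw [← (measurePreserving_tmap d).map_eq,
        integral_map (measurePreserving_tmap d).measurable.aemeasurable
          ((measurePreserving_tmap d).map_eq.symm ▸ hF)]
    rw [e2]
    have e3 : (fun y => chi (-k) (tmap d y) * H (tmap d y))
        =ᵐ[μT d] fun y => h y * chi (-k) (tmap d y) := by
      filter_upwards [hHtm] with y hy
      rw [hy, mul_comm]
    rw [integral_congr_ae e3]
    rw [μT, ← fourierCoefT_eq h k]
    exact hz k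
  have horth : HL ∈ (span ℂ (Set.range (chiLp d)))ᗮ := by
    rw [Submodule.mem_orthogonal]
    intro u hu
    induction hu using Submodule.span_induction with
    | mem u hu => obtain ⟨k, rfl⟩ := hu; exact key k
    | zero => simp
    | add u v _ _ h1 h2 => rw [inner_add_left, h1, h2, add_zero]
    | smul c u _ h1 => rw [inner_smul_left, h1, mul_zero]
  have htop := span_chiLp_closure_eq_top d
  rw [Submodule.topologicalClosure_eq_top_iff] at htop
  rw [htop, Submodule.mem_bot] at horth
  have hH0 : H =ᵐ[volume] 0 := by
    refine (MemLp.coeFn_toLp hH).symm.trans ?_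
    rw [← hHL, horth]
    exact Lp.coeFn_zero ℂ 2 _
  have : (fun y => H (tmap d y)) =ᵐ[μT d] (fun _ => 0) := by
    have := MeasureTheory.ae_eq_comp (f := tmap d) (g := H) (g' := 0)
      (measurePreserving_tmap d).measurable.aemeasurable
      (by rw [(measurePreserving_tmap d).map_eq]; exact hH0)
    exact this
  exact hHtm.symm.trans this

end Aux
namespace Aux

lemma summable_pi_prod : ∀ {d : ℕ} (g : Fin d → ℤ → ℝ), (∀ j, Summable (g j)) →
    (∀ j m, 0 ≤ g j m) → Summable (fun k : Fin d → ℤ => ∏ j, g j (k j)) := by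
  intro d
  induction d with
  | zero =>
    intro g _ _
    exact Summable.of_finite
  | succ n ih =>
    intro g hg hnn
    have h₁ : Summable (fun m : ℤ => g 0 m) := hg 0
    have h₂ : Summable (fun q : Fin n → ℤ => ∏ j : Fin n, g j.succ (q j)) :=
      ih (fun j => g j.succ) (fun j => hg j.succ) (fun j m => hnn j.succ m)
    have h₃ : (0 : ℤ → ℝ) ≤ fun m => g 0 m := fun m => hnn 0 m
    have h₄ : (0 : (Fin n → ℤ) → ℝ) ≤ fun q => ∏ j : Fin n, g j.succ (q j) :=
      fun q => Finset.prod_nonneg fun j _ => hnn _ _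
    have key : Summable (fun p : ℤ × (Fin n → ℤ) =>
        g 0 p.1 * ∏ j : Fin n, g j.succ (p.2 j)) :=
      Summable.mul_of_nonneg (f := fun m : ℤ => g 0 m)
        (g := fun q : Fin n → ℤ => ∏ j : Fin n, g j.succ (q j)) h₁ h₂ h₃ h₄
    refine ((Fin.consEquiv (fun _ : Fin (n+1) => ℤ)).summable_iff).mp ?_
    refine key.congr fun p => ?_
    rw [Function.comp_apply, Fin.prod_univ_succ]
    simp [Fin.consEquiv]

lemma summable_int_weight (p θ : ℝ) (hp : 0 < p) (hθ : 0 < θ) (h1 : 1 < p * θ) :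
    Summable (fun m : ℤ => ((1 + |(m:ℝ)| ^ p)⁻¹) ^ θ) := by
  have hb : Summable (fun m : ℤ => |(m:ℝ)| ^ (-(p * θ)) + if m = 0 then (1:ℝ) else 0) :=
    (Real.summable_abs_int_rpow h1).add
      (summable_of_ne_finset_zero (s := {0}) fun m hm => if_neg (by simpa using hm))
  refine Summable.of_nonneg_of_le (fun m => Real.rpow_nonneg (inv_nonneg.mpr (by positivity)) θ)
    (fun m => ?_) hb
  by_cases hm : m = 0
  · subst hm
    simp only [Int.cast_zero, abs_zero, Real.zero_rpow hp.ne', add_zero, if_pos rfl]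
    rw [Real.zero_rpow (by nlinarith : -(p*θ) ≠ 0)]
    norm_num
  · rw [if_neg hm, add_zero]
    have hm1 : (1:ℝ) ≤ |(m:ℝ)| := by
      rw [← Int.cast_abs]
      exact_mod_cast Int.one_le_abs (by exact_mod_cast hm)
    have hmp : (0:ℝ) < |(m:ℝ)| ^ p := Real.rpow_pos_of_pos (by linarith) p
    have step1 : (1 + |(m:ℝ)| ^ p)⁻¹ ≤ (|(m:ℝ)| ^ p)⁻¹ := by
      apply inv_anti₀ hmp
      linarith
    calc ((1 + |(m:ℝ)| ^ p)⁻¹) ^ θ ≤ ((|(m:ℝ)| ^ p)⁻¹) ^ θ :=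
          Real.rpow_le_rpow (by positivity) step1 hθ.le
      _ = |(m:ℝ)| ^ (-(p * θ)) := by
          rw [← Real.rpow_neg (by positivity), ← Real.rpow_mul (abs_nonneg _)]
          ring_nf

lemma summable_weight (d : ℕ) (hd : 1 ≤ d) (sv : Fin d → ℝ) (hsv : ∀ j, 0 < sv j)
    (hsum : (∑ j, 1 / sv j) < 2) :
    Summable (fun k : Fin d → ℤ => (1 + ∑ j, |(k j : ℝ)| ^ (2 * sv j))⁻¹) := by
  have hdpos : (0:ℝ) < d := by exact_mod_cast hd
  set ε : ℝ := (2 - ∑ j, 1 / sv j) / (2 * d) with hε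
  have hεpos : 0 < ε := div_pos (by linarith) (by linarith)
  set θ : Fin d → ℝ := fun j => 1 / (2 * sv j) + ε with hθdef
  have hθpos : ∀ j, 0 < θ j := fun j => by
    have := hsv j
    have : 0 < 1 / (2 * sv j) := by positivity
    simp only [hθdef]
    linarith
  have hθsum : ∑ j, θ j = 1 := by
    simp only [hθdef]
    rw [Finset.sum_add_distrib, Finset.sum_const, Finset.card_univ, Fintype.card_fin]
    have h1 : ∑ j, 1 / (2 * sv j) = (∑ j, 1 / sv j) / 2 := by
      rw [Finset.sum_div]
      refine Finset.sum_congr rfl fun j _ => ?_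
      rw [div_div]
      ring_nf
    rw [h1, hε]
    have hd0 : (d:ℝ) ≠ 0 := hdpos.ne'
    field_simp
    have e : (d:ℝ) * (d:ℝ)⁻¹ = 1 := mul_inv_cancel₀ hd0
    linear_combination (2 - ∑ x, 1 / sv x) * e
  have hθle1 : ∀ j, θ j ≤ 1 := by
    intro j
    rw [← hθsum]
    exact Finset.single_le_sum (fun i _ => (hθpos i).le) (Finset.mem_univ j)
  -- the product majorant
  set g : Fin d → ℤ → ℝ := fun j m => ((1 + |(m:ℝ)| ^ (2 * sv j))⁻¹) ^ (θ j) with hg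
  have hgsummable : ∀ j, Summable (g j) := by
    intro j
    refine summable_int_weight (2 * sv j) (θ j) (by have := hsv j; linarith) (hθpos j) ?_
    have h2s : (0:ℝ) < 2 * sv j := by have := hsv j; linarith
    have : (2 * sv j) * (1 / (2 * sv j)) = 1 := by field_simp [(hsv j).ne']
    calc (1:ℝ) = (2 * sv j) * (1 / (2 * sv j)) := this.symm
      _ < (2 * sv j) * θ j := by
          apply mul_lt_mul_of_pos_left _ h2s
          simp only [hθdef]
          linarith
  have hgnn : ∀ j m, 0 ≤ g j m := fun j m => Real.rpow_nonneg (by positivity) _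
  have hP : Summable (fun k : Fin d → ℤ => ∏ j, g j (k j)) :=
    summable_pi_prod g hgsummable hgnn
  -- comparison
  refine Summable.of_nonneg_of_le (fun k => by positivity) (fun k => ?_) (hP.mul_left (d:ℝ))
  set a : Fin d → ℝ := fun j => 1 + |((k j : ℤ) : ℝ)| ^ (2 * sv j) with ha
  have hapos : ∀ j, 0 < a j := fun j => by positivity
  have ha1 : ∀ j, 1 ≤ a j := fun j => by
    have : (0:ℝ) ≤ |((k j : ℤ) : ℝ)| ^ (2 * sv j) := by positivity
    simp only [ha]; linarith
  have hAM : ∏ j, (a j) ^ (θ j) ≤ ∑ j, θ j * a j :=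
    Real.geom_mean_le_arith_mean_weighted Finset.univ θ a
      (fun i _ => (hθpos i).le) hθsum (fun i _ => (hapos i).le)
  have hsum2 : ∑ j, θ j * a j ≤ (d:ℝ) * (1 + ∑ j, |((k j : ℤ) : ℝ)| ^ (2 * sv j)) := by
    have step1 : ∑ j, θ j * a j ≤ ∑ j, a j := by
      refine Finset.sum_le_sum fun j _ => ?_
      have := hapos j
      nlinarith [hθle1 j, hθpos j]
    have step2 : ∑ j, a j = (d:ℝ) + ∑ j, |((k j : ℤ) : ℝ)| ^ (2 * sv j) := by
      simp only [ha]
      rw [Finset.sum_add_distrib, Finset.sum_const, Finset.card_univ, Fintype.card_fin]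
      simp
    have step3 : (d:ℝ) + ∑ j, |((k j : ℤ) : ℝ)| ^ (2 * sv j)
        ≤ (d:ℝ) * (1 + ∑ j, |((k j : ℤ) : ℝ)| ^ (2 * sv j)) := by
      have hw : (0:ℝ) ≤ ∑ j, |((k j : ℤ) : ℝ)| ^ (2 * sv j) :=
        Finset.sum_nonneg fun j _ => by positivity
      have hd1 : (1:ℝ) ≤ d := by exact_mod_cast hd
      nlinarith
    linarith
  have hprodpos : 0 < ∏ j, (a j) ^ (θ j) :=
    Finset.prod_pos fun j _ => Real.rpow_pos_of_pos (hapos j) _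
  have hPk : ∏ j, g j (k j) = (∏ j, (a j) ^ (θ j))⁻¹ := by
    rw [← Finset.prod_inv_distrib]
    refine Finset.prod_congr rfl fun j _ => ?_
    exact Real.inv_rpow (hapos j).le (θ j)
  rw [hPk]
  have hwpos : (0:ℝ) < 1 + ∑ j, |((k j : ℤ) : ℝ)| ^ (2 * sv j) := by positivity
  have h2 : ∏ j, (a j) ^ (θ j) ≤ (d:ℝ) * (1 + ∑ j, |((k j : ℤ) : ℝ)| ^ (2 * sv j)) :=
    le_trans hAM hsum2
  calc (1 + ∑ j, |((k j : ℤ) : ℝ)| ^ (2 * sv j))⁻¹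
      = (d:ℝ) * ((d:ℝ) * (1 + ∑ j, |((k j : ℤ) : ℝ)| ^ (2 * sv j)))⁻¹ := by
        rw [mul_inv]
        rw [← mul_assoc, mul_inv_cancel₀ hdpos.ne']
        rw [one_mul]
    _ ≤ (d:ℝ) * (∏ j, (a j) ^ (θ j))⁻¹ := by
        apply mul_le_mul_of_nonneg_left _ hdpos.le
        exact inv_anti₀ hprodpos h2

end Aux
namespace Aux
open Submodule Set ContinuousMap
open scoped ComplexConjugate Real

lemma muT_univ (d : ℕ) : μT d Set.univ = 1 := by
  rw [μT, Measure.restrict_apply_univ, Tcube, volume_pi_pi]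
  have : volume (Set.Ico (-(1/2):ℝ) (1/2)) = 1 := by
    rw [Real.volume_Ico]
    norm_num
  rw [Finset.prod_congr rfl fun (j : Fin d) _ => this, Finset.prod_const, one_pow]

instance (d : ℕ) : IsProbabilityMeasure (μT d) := ⟨muT_univ d⟩

lemma chi_norm {d : ℕ} (k : Fin d → ℤ) (x : G d) : ‖chi k x‖ = 1 := by
  rw [chi_apply, norm_prod]
  refine Finset.prod_eq_one fun j _ => ?_
  rw [fourier_apply]
  exact Circle.norm_coe _

lemma continuous_tmap (d : ℕ) : Continuous (tmap d) :=
  continuous_pi fun j => Continuous.comp (AddCircle.continuous_mk' (1:ℝ)) (continuous_apply j)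

lemma tmap_periodic {d : ℕ} (x : Fin d → ℝ) (m : Fin d → ℤ) :
    tmap d (x + fun j => (m j : ℝ)) = tmap d x := by
  funext j
  show ((x j + (m j : ℝ) : ℝ) : AddCircle (1:ℝ)) = ((x j : ℝ) : AddCircle (1:ℝ))
  have h0 : (((m j : ℝ) : ℝ) : AddCircle (1:ℝ)) = 0 := by
    rw [AddCircle.coe_eq_zero_iff]
    exact ⟨m j, by simp⟩
  have : ((x j + (m j : ℝ) : ℝ) : AddCircle (1:ℝ))
      = ((x j : ℝ) : AddCircle (1:ℝ)) + (((m j : ℝ) : ℝ) : AddCircle (1:ℝ)) := rfl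
  rw [this, h0, add_zero]

lemma integral_chi_tmap {d : ℕ} (m : Fin d → ℤ) :
    ∫ y, chi m (tmap d y) ∂(μT d) = if m = 0 then 1 else 0 := by
  have hF : AEStronglyMeasurable (fun x : G d => chi m x) volume :=
    (chi m).continuous.aestronglyMeasurable
  have key : ∫ x : G d, chi m x = ∫ y, chi m (tmap d y) ∂(μT d) := by
    rw [← (measurePreserving_tmap d).map_eq,
      integral_map (measurePreserving_tmap d).measurable.aemeasurable
        ((measurePreserving_tmap d).map_eq.symm ▸ hF)]
  rw [← key, integral_chi]

end Aux
namespace Aux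
open Submodule Set ContinuousMap
open scoped ComplexConjugate Real

lemma fourierCoefT_eq' {d : ℕ} (f : (Fin d → ℝ) → ℂ) (k : Fin d → ℤ) :
    fourierCoefT f k = ∫ x, f x * chi (-k) (tmap d x) ∂(μT d) :=
  fourierCoefT_eq f k

lemma fourierCoefT_tsum {d : ℕ} (c : (Fin d → ℤ) → ℂ) (hc : Summable fun k => ‖c k‖)
    (k : Fin d → ℤ) :
    fourierCoefT (fun x => ∑' l, c l * chi l (tmap d x)) k = c k := by
  rw [fourierCoefT_eq']
  have hmeas : ∀ l : Fin d → ℤ, AEStronglyMeasurable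
      (fun x => c l * chi l (tmap d x) * chi (-k) (tmap d x)) (μT d) := by
    intro l
    exact ((continuous_const.mul ((chi l).continuous.comp (continuous_tmap d))).mul
      ((chi (-k)).continuous.comp (continuous_tmap d))).aestronglyMeasurable
  have hnorm : ∀ (l : Fin d → ℤ) (x : Fin d → ℝ),
      ‖c l * chi l (tmap d x) * chi (-k) (tmap d x)‖ = ‖c l‖ := by
    intro l x
    rw [norm_mul, norm_mul, chi_norm, chi_norm, mul_one, mul_one]
  have hlint : ∑' l : Fin d → ℤ, ∫⁻ x, ‖c l * chi l (tmap d x) * chi (-k) (tmap d x)‖₊ ∂(μT d)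
      ≠ ⊤ := by
    have heach : ∀ l : Fin d → ℤ,
        ∫⁻ x, ‖c l * chi l (tmap d x) * chi (-k) (tmap d x)‖₊ ∂(μT d)
          = ENNReal.ofReal ‖c l‖ := by
      intro l
      have : ∀ x : Fin d → ℝ, (‖c l * chi l (tmap d x) * chi (-k) (tmap d x)‖₊ : ℝ≥0∞)
          = ENNReal.ofReal ‖c l‖ := by
        intro x
        rw [← enorm_eq_nnnorm, ← ofReal_norm, hnorm]
      simp_rw [this]
      rw [lintegral_const, muT_univ, mul_one]
    simp_rw [heach]
    rw [← ENNReal.ofReal_tsum_of_nonneg (fun l => norm_nonneg _) hc]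
    exact ENNReal.ofReal_ne_top
  have hswap := MeasureTheory.integral_tsum (μ := μT d)
    (f := fun l x => c l * chi l (tmap d x) * chi (-k) (tmap d x)) hmeas hlint
  calc ∫ x, (∑' l, c l * chi l (tmap d x)) * chi (-k) (tmap d x) ∂(μT d)
      = ∫ x, ∑' l, c l * chi l (tmap d x) * chi (-k) (tmap d x) ∂(μT d) := by
        congr 1
        funext x
        rw [← tsum_mul_right]
    _ = ∑' l, ∫ x, c l * chi l (tmap d x) * chi (-k) (tmap d x) ∂(μT d) := hswap
    _ = ∑' l, c l * (if l = k then 1 else 0) := by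
        congr 1
        funext l
        have hpt : ∀ x, c l * chi l (tmap d x) * chi (-k) (tmap d x)
            = c l * chi (l + -k) (tmap d x) := by
          intro x
          rw [chi_add l (-k), ContinuousMap.mul_apply]
          ring
        simp_rw [hpt]
        rw [MeasureTheory.integral_const_mul, integral_chi_tmap]
        congr 1
        simp [add_neg_eq_zero]
    _ = c k := by
        rw [tsum_eq_single k (fun l hl => by rw [if_neg hl, mul_zero])]
        rw [if_pos rfl, mul_one]

lemma part1 {d : ℕ} (hd : 1 ≤ d) (sv : Fin d → ℝ) (hsv : ∀ j, 0 < sv j)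
    (hsum : (∑ j, 1 / sv j) < 2) (f : (Fin d → ℝ) → ℂ)
    (hf2 : Summable (fun k : Fin d → ℤ =>
      (∑ j, |(k j : ℝ)| ^ (2 * sv j)) * ‖fourierCoefT f k‖ ^ 2)) :
    Summable (fun k : Fin d → ℤ => ‖fourierCoefT f k‖) := by
  set c : (Fin d → ℤ) → ℝ := fun k => ‖fourierCoefT f k‖ with hcdef
  set w : (Fin d → ℤ) → ℝ := fun k => ∑ j, |(k j : ℝ)| ^ (2 * sv j) with hwdef
  have hwnn : ∀ k, 0 ≤ w k := fun k => Finset.sum_nonneg fun j _ => by positivity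
  have hw1 : ∀ k : Fin d → ℤ, k ≠ 0 → (1:ℝ) ≤ w k := by
    intro k hk
    obtain ⟨j, hj⟩ := Function.ne_iff.mp hk
    have hkj : (1:ℝ) ≤ |(k j : ℝ)| := by
      rw [← Int.cast_abs]
      exact_mod_cast Int.one_le_abs (by simpa using hj)
    have h1 : (1:ℝ) ≤ |(k j : ℝ)| ^ (2 * sv j) := by
      have := Real.rpow_le_rpow_of_exponent_le hkj
        (le_of_lt (by have := hsv j; linarith : (0:ℝ) < 2 * sv j))
      rw [Real.rpow_zero] at this
      exact this
    calc (1:ℝ) ≤ |(k j : ℝ)| ^ (2 * sv j) := h1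
      _ ≤ w k := by
          rw [hwdef]
          exact Finset.single_le_sum (f := fun i => |(k i : ℝ)| ^ (2 * sv i))
            (fun i _ => by positivity) (Finset.mem_univ j)
  have hsq : Summable (fun k => c k ^ 2) := by
    have hbound : Summable (fun k : Fin d → ℤ =>
        w k * c k ^ 2 + if k = 0 then c 0 ^ 2 else 0) :=
      hf2.add (summable_of_ne_finset_zero (s := {0}) fun m hm => if_neg (by simpa using hm))
    refine Summable.of_nonneg_of_le (fun k => by positivity) (fun k => ?_) hbound
    by_cases hk : k = 0
    · subst hk
      rw [if_pos rfl]
      have := hwnn 0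
      nlinarith [sq_nonneg (c 0)]
    · rw [if_neg hk, add_zero]
      nlinarith [hw1 k hk, sq_nonneg (c k)]
  have hS2 : Summable (fun k => (1 + w k) * c k ^ 2) := by
    refine Summable.congr (hsq.add hf2) fun k => ?_
    ring
  have hS1 := summable_weight d hd sv hsv hsum
  refine Summable.of_nonneg_of_le (fun k => norm_nonneg _) (fun k => ?_)
    ((hS1.add hS2).div_const 2)
  have ht0 : (0:ℝ) < 1 + w k := by have := hwnn k; linarith
  have hti : (1 + w k) * (1 + w k)⁻¹ = 1 := mul_inv_cancel₀ ht0.ne'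
  have hgoal : 2 * c k ≤ (1 + w k)⁻¹ + (1 + w k) * c k ^ 2 := by
    nlinarith [sq_nonneg ((1 + w k) * c k - 1), ht0, inv_pos.mpr ht0, sq_nonneg (c k),
      hwnn k]
  linarith

end Aux

/-- **Lemma.**  Let `s⃗ ∈ (0,∞)^d` satisfy `∑_j 1/s_j < 2`.  If `f ∈ H^{s⃗}(𝕋^d)`, then the
Fourier coefficients of `f` are absolutely summable; in particular `f` has a continuous
representative. -/
theorem anisotropic_sobolev_summable_fourier
    (d : ℕ) (hd : 1 ≤ d) (sv : Fin d → ℝ) (hsv : ∀ j, 0 < sv j)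
    (hsum : (∑ j, 1 / sv j) < 2)
    (f : (Fin d → ℝ) → ℂ) (hper : ZPeriodic f) (hf : MemHvec d sv f) :
    Summable (fun k : Fin d → ℤ => ‖fourierCoefT f k‖) ∧
    ∃ f₀ : (Fin d → ℝ) → ℂ, Continuous f₀ ∧ ZPeriodic f₀ ∧ f =ᵐ[μT d] f₀ := by
  obtain ⟨hfL2, hfsum⟩ := hf
  have hsum1 : Summable (fun k => ‖fourierCoefT f k‖) := Aux.part1 hd sv hsv hsum f hfsum
  refine ⟨hsum1, ?_⟩
  set c : (Fin d → ℤ) → ℂ := fun k => fourierCoefT f k with hc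
  set f₀ : (Fin d → ℝ) → ℂ := fun x => ∑' l, c l * Aux.chi l (Aux.tmap d x) with hf₀
  have hcont : Continuous f₀ := by
    refine continuous_tsum (fun l => continuous_const.mul
      ((Aux.chi l).continuous.comp (Aux.continuous_tmap d))) hsum1 (fun l x => ?_)
    rw [norm_mul, Aux.chi_norm, mul_one]
  have hper₀ : ZPeriodic f₀ := by
    intro x m
    simp only [hf₀]
    rw [Aux.tmap_periodic]
  have hf₀L2 : MemLp f₀ 2 (μT d) := by
    refine MemLp.of_bound hcont.aestronglyMeasurable (∑' l, ‖c l‖)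
      (Filter.Eventually.of_forall fun x => ?_)
    have h1 : ∀ l, ‖c l * Aux.chi l (Aux.tmap d x)‖ = ‖c l‖ := fun l => by
      rw [norm_mul, Aux.chi_norm, mul_one]
    calc ‖f₀ x‖ ≤ ∑' l, ‖c l * Aux.chi l (Aux.tmap d x)‖ :=
          norm_tsum_le_tsum_norm (hsum1.congr fun l => (h1 l).symm)
      _ = ∑' l, ‖c l‖ := tsum_congr h1
  have hcoef₀ : ∀ k, fourierCoefT f₀ k = c k := fun k => Aux.fourierCoefT_tsum c hsum1 k
  have hint : ∀ (g : (Fin d → ℝ) → ℂ), MemLp g 2 (μT d) → ∀ k : Fin d → ℤ,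
      Integrable (fun x => g x * Aux.chi (-k) (Aux.tmap d x)) (μT d) := by
    intro g hg k
    have hgi : Integrable g (μT d) := hg.integrable one_le_two
    have hE := ((Aux.chi (-k)).continuous.comp (Aux.continuous_tmap d)).aestronglyMeasurable
      (μ := μT d)
    have h2 : Integrable (fun x => Aux.chi (-k) (Aux.tmap d x) * g x) (μT d) :=
      hgi.bdd_mul hE (Filter.Eventually.of_forall fun x => (Aux.chi_norm _ _).le)
    exact h2.congr (Filter.Eventually.of_forall fun x => mul_comm _ _)
  have hcoefh : ∀ k, fourierCoefT (fun x => f x - f₀ x) k = 0 := by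
    intro k
    rw [Aux.fourierCoefT_eq']
    simp_rw [sub_mul]
    rw [integral_sub (hint f hfL2 k) (hint f₀ hf₀L2 k)]
    rw [← Aux.fourierCoefT_eq', ← Aux.fourierCoefT_eq', hcoef₀ k]
    simp [hc]
  have hhl2 : MemLp (fun x => f x - f₀ x) 2 (μT d) := hfL2.sub hf₀L2
  have hae := Aux.ae_zero_of_coeff_zero hhl2 hcoefh
  refine ⟨f₀, hcont, hper₀, ?_⟩
  filter_upwards [hae] with x hx
  have : f x - f₀ x = 0 := hx
  exact sub_eq_zero.mp this
end
end

section
/- Let d ≥ 2 and let S ⊂ ℝ^d be a Lebesgue measurable set with |S| > 0 and |ℝ^d ∖ S| > 0. Then there exist an index i₀ ∈ {1,…,d} and a set A ⊂ ℝ^{d−1} of positive (d−1)-dimensional Lebesgue measure such that for every x ∈ A the line L_{i₀}(x) satisfies S ∩ L_{i₀}(x) ≠ ∅ and S ∩ L_{i₀}(x) ≠ L_{i₀}(x) (i.e., the line meets both S and its complement). -/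
open MeasureTheory Set
open scoped ENNReal

variable {m : ℕ}



/-- slice set -/
def slS (i : Fin (m+1)) (W : Set (Fin (m+1) → ℝ)) (y : Fin m → ℝ) : Set ℝ :=
  {t : ℝ | i.insertNth t y ∈ W}

lemma preim_eq (i : Fin (m+1)) (W : Set (Fin (m+1) → ℝ)) (y : Fin m → ℝ) :
    (fun t : ℝ => (t, y)) ⁻¹' ((MeasurableEquiv.piFinSuccAbove (fun _ : Fin (m+1) => ℝ) i).symm ⁻¹' W)
      = slS i W y := by
  ext t
  simp [slS, MeasurableEquiv.piFinSuccAbove, Fin.insertNthEquiv]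

lemma vol_slices (i : Fin (m+1)) (W : Set (Fin (m+1) → ℝ)) (hW : MeasurableSet W) :
    volume W = ∫⁻ y, volume (slS i W y) := by
  have hmp := (volume_preserving_piFinSuccAbove (fun _ : Fin (m+1) => ℝ) i).symm
  have h1 : volume ((MeasurableEquiv.piFinSuccAbove (fun _ : Fin (m+1) => ℝ) i).symm ⁻¹' W)
      = volume W := hmp.measure_preimage hW.nullMeasurableSet
  rw [← h1, Measure.volume_eq_prod,
    Measure.prod_apply_symm ((MeasurableEquiv.piFinSuccAbove (fun _ : Fin (m+1) => ℝ) i).symm.measurable hW)]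
  simp_rw [preim_eq]

lemma meas_slv (i : Fin (m+1)) (W : Set (Fin (m+1) → ℝ)) (hW : MeasurableSet W) :
    Measurable fun y => volume (slS i W y) := by
  have := measurable_measure_prodMk_right (μ := (volume : Measure ℝ))
    ((MeasurableEquiv.piFinSuccAbove (fun _ : Fin (m+1) => ℝ) i).symm.measurable hW)
  simp only [preim_eq] at this
  exact this





def rmN (i : Fin (m+1)) (x : Fin (m+1) → ℝ) : Fin m → ℝ := fun j => x (i.succAbove j)




lemma pos_set_pos (i : Fin (m+1)) (W : Set (Fin (m+1) → ℝ)) (hW : MeasurableSet W)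
    (h : 0 < volume W) : 0 < volume {y | 0 < volume (slS i W y)} := by
  by_contra hc
  push_neg at hc
  have hz : volume {y | 0 < volume (slS i W y)} = 0 := le_antisymm hc bot_le
  have hae : (fun y => volume (slS i W y)) =ᵐ[volume] 0 := by
    refine (measure_eq_zero_iff_ae_notMem.mp hz).mono fun y hy => ?_
    simpa [pos_iff_ne_zero] using hy
  have : volume W = 0 := by
    rw [vol_slices i W hW, lintegral_congr_ae hae]; simp
  exact h.ne' this

lemma null_of_ae_null (i : Fin (m+1)) (W : Set (Fin (m+1) → ℝ)) (hW : MeasurableSet W)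
    (h : ∀ᵐ y, volume (slS i W y) = 0) : volume W = 0 := by
  rw [vol_slices i W hW, lintegral_congr_ae h]; simp

section Cyl
variable (i : Fin (m+1)) (S : Set (Fin (m +1) → ℝ))

lemma measC (hS : MeasurableSet S) : MeasurableSet {x : Fin (m+1) → ℝ | rmN i x ∈
    {y : Fin m → ℝ | volume (slS i Sᶜ y) = 0}} := by
  have hrm : Measurable (rmN i) :=
    measurable_pi_iff.2 fun j => measurable_pi_apply _
  exact hrm ((meas_slv i Sᶜ hS.compl) (measurableSet_singleton 0))

lemma cyl_ae (hS : MeasurableSet S)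
    (hnull : volume ({y : Fin m → ℝ | 0 < volume (slS i S y)}
      ∩ {y | 0 < volume (slS i Sᶜ y)}) = 0) :
    S =ᵐ[volume] {x | rmN i x ∈ {y : Fin m → ℝ | volume (slS i Sᶜ y) = 0}} := by
  set U : Set (Fin m → ℝ) := {y | volume (slS i Sᶜ y) = 0} with hU
  set C : Set (Fin (m+1) → ℝ) := {x | rmN i x ∈ U} with hC
  have hCm : MeasurableSet C := measC i S hS
  have hrm : ∀ (t : ℝ) (y : Fin m → ℝ), rmN i (i.insertNth t y) = y := by
    intro t y; funext j; simp [rmN]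
  have hslC : ∀ (t : ℝ) (y : Fin m → ℝ), (i.insertNth t y ∈ C) ↔ y ∈ U := by
    intro t y; rw [hC, Set.mem_setOf_eq, hrm]
  refine ae_eq_set.2 ⟨?_, ?_⟩
  · refine null_of_ae_null i _ (hS.diff hCm) ?_
    refine (measure_eq_zero_iff_ae_notMem.mp hnull).mono fun y hy => ?_
    by_cases hyU : y ∈ U
    · have : slS i (S \ C) y = ∅ := by
        ext t
        simp only [slS, Set.mem_setOf_eq, Set.mem_diff, Set.mem_empty_iff_false, iff_false]
        rintro ⟨-, h2⟩; exact h2 ((hslC t y).2 hyU)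
      simp [this]
    · have h2 : 0 < volume (slS i Sᶜ y) := by
        simpa [hU, pos_iff_ne_zero] using hyU
      have h1 : volume (slS i S y) = 0 := by
        by_contra h
        exact hy ⟨pos_iff_ne_zero.2 h, h2⟩
      exact measure_mono_null (fun t ht => ht.1) h1
  · refine null_of_ae_null i _ (hCm.diff hS) (Filter.Eventually.of_forall fun y => ?_)
    by_cases hyU : y ∈ U
    · exact measure_mono_null (fun t ht => ht.2) hyU
    · have : slS i (C \ S) y = ∅ := by
        ext t
        simp only [slS, Set.mem_setOf_eq, Set.mem_diff, Set.mem_empty_iff_false, iff_false]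
        rintro ⟨h1, -⟩; exact hyU ((hslC t y).1 h1)
      simp [this]

lemma cyl_invariant (t : ℝ) (U : Set (Fin m → ℝ)) :
    (fun x => x + Pi.single i t) ⁻¹' {x | rmN i x ∈ U} = {x | rmN i x ∈ U} := by
  have key : ∀ x : Fin (m+1) → ℝ, rmN i (x + Pi.single i t) = rmN i x := by
    intro x; funext j
    have hne : i.succAbove j ≠ i := Fin.succAbove_ne i j
    simp [rmN, Pi.single_eq_of_ne hne]
  ext x; simp [key]

end Cyl




lemma trans_all (S : Set (Fin (m+1) → ℝ))
    (hsingle : ∀ (i : Fin (m+1)) (t : ℝ),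
      S =ᵐ[volume] (fun x => x + Pi.single i t) ⁻¹' S) :
    ∀ v : Fin (m+1) → ℝ, S =ᵐ[volume] (fun x => x + v) ⁻¹' S := by
  set P : (Fin (m+1) → ℝ) → Prop := fun v => S =ᵐ[volume] (fun x => x + v) ⁻¹' S with hP
  have hqmp : ∀ v : Fin (m+1) → ℝ,
      Measure.QuasiMeasurePreserving (fun x : Fin (m+1) → ℝ => x + v) volume volume :=
    fun v => (measurePreserving_add_right volume v).quasiMeasurePreserving
  have h0 : P 0 := by simp [hP]; exact Filter.EventuallyEq.rfl
  have hadd : ∀ a b, P a → P b → P (a + b) := by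
    intro a b ha hb
    have h1 : (fun x : Fin (m+1) → ℝ => x + a) ⁻¹' S
        =ᵐ[volume] (fun x => x + a) ⁻¹' ((fun x => x + b) ⁻¹' S) :=
      (hqmp a).preimage_ae_eq hb
    have h2 : (fun x : Fin (m+1) → ℝ => x + a) ⁻¹' ((fun x => x + b) ⁻¹' S)
        = (fun x => x + (a + b)) ⁻¹' S := by
      ext x; simp [add_assoc]
    exact ha.trans (h2 ▸ h1)
  intro v
  have hv : v = ∑ i : Fin (m+1), Pi.single i (v i) := (Finset.univ_sum_single v).symm
  rw [hv]
  exact Finset.sum_induction _ P hadd h0 (fun i _ => hsingle i (v i))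

lemma final_contradiction (S : Set (Fin (m+1) → ℝ)) (hS : MeasurableSet S)
    (h1 : 0 < volume S) (h2 : 0 < volume Sᶜ)
    (htrans : ∀ v : Fin (m+1) → ℝ, S =ᵐ[volume] (fun x => x + v) ⁻¹' S) : False := by
  have hind : Measurable (S.indicator (1 : (Fin (m+1) → ℝ) → ℝ≥0∞)) :=
    measurable_one.indicator hS
  have hindc : Measurable (Sᶜ.indicator (1 : (Fin (m+1) → ℝ) → ℝ≥0∞)) :=
    measurable_one.indicator hS.compl
  set F : (Fin (m+1) → ℝ) → (Fin (m+1) → ℝ) → ℝ≥0∞ :=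
    fun v x => Sᶜ.indicator 1 x * S.indicator 1 (x + v) with hF
  have hFm : Measurable (Function.uncurry F) := by
    apply Measurable.mul
    · exact hindc.comp measurable_snd
    · exact hind.comp (measurable_snd.add measurable_fst)
  have hzero : ∀ v, ∫⁻ x, F v x = 0 := by
    intro v
    have hset : (fun x => F v x)
        = ((fun x => x + v) ⁻¹' S \ S).indicator 1 := by
      funext x
      by_cases hx : x ∈ S <;> by_cases hxv : x + v ∈ S <;>
        simp [hF, Set.indicator_apply, hx, hxv, Set.mem_diff]
    rw [hset, lintegral_indicator_one
      ((measurable_add_const v hS : MeasurableSet _).diff hS)]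
    exact (ae_eq_set.1 (htrans v)).2
  have hswap : ∫⁻ v, ∫⁻ x, F v x = ∫⁻ x, ∫⁻ v, F v x :=
    lintegral_lintegral_swap hFm.aemeasurable
  have hinner : ∀ x, ∫⁻ v, F v x = Sᶜ.indicator 1 x * volume S := by
    intro x
    rw [hF]
    simp only
    have hmv : Measurable fun v : Fin (m+1) → ℝ => S.indicator 1 (x + v) :=
      hind.comp (measurable_const_add x)
    rw [lintegral_const_mul _ hmv]
    congr 1
    have := (measurePreserving_add_left (volume : Measure (Fin (m+1) → ℝ)) x).lintegral_comp
      hind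
    calc ∫⁻ v, S.indicator 1 (x + v) = ∫⁻ y, S.indicator 1 y := this
      _ = volume S := lintegral_indicator_one hS
  have houter : ∫⁻ x, ∫⁻ v, F v x = volume S * volume Sᶜ := by
    simp_rw [hinner]
    have : (fun x => Sᶜ.indicator 1 x * volume S)
        = Sᶜ.indicator (fun _ => volume S) := by
      funext x; by_cases hx : x ∈ Sᶜ <;> simp [Set.indicator_apply, hx]
    rw [this, lintegral_indicator hS.compl, setLIntegral_const, mul_comm]
  have : (0 : ℝ≥0∞) = volume S * volume Sᶜ := by
    rw [← houter, ← hswap]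
    simp [hzero]
  exact (ENNReal.mul_pos h1.ne' h2.ne').ne' this.symm

/-- **Lemma (lines meeting a set and its complement).**
Let `d = m + 1 ≥ 2` and let `S ⊂ ℝ^d` be a Lebesgue measurable set with `|S| > 0` and
`|S^c| > 0`.  Then there are an index `i₀ ∈ {1,…,d}` and a set `A ⊂ ℝ^{d-1}` of positive
`(d-1)`-dimensional Lebesgue measure such that for every `x ∈ A` the line `L_{i₀}(x)` parallel
to the `i₀`-th coordinate axis through `x` meets both `S` and its complement. -/
theorem lines_meeting_set_and_complement
    (m : ℕ) (hm : 1 ≤ m) (S : Set (Fin (m + 1) → ℝ)) (hS : MeasurableSet S)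
    (h1 : 0 < volume S) (h2 : 0 < volume Sᶜ) :
    ∃ i₀ : Fin (m + 1), ∃ A : Set (Fin m → ℝ), 0 < volume A ∧
      ∀ x ∈ A, (∃ t : ℝ, i₀.insertNth t x ∈ S) ∧ (∃ t : ℝ, i₀.insertNth t x ∉ S) := by
  classical
  by_cases hex : ∃ i : Fin (m + 1),
      0 < volume ({y : Fin m → ℝ | 0 < volume (slS i S y)} ∩ {y | 0 < volume (slS i Sᶜ y)})
  · obtain ⟨i, hi⟩ := hex
    refine ⟨i, _, hi, fun x hx => ?_⟩
    obtain ⟨hx1, hx2⟩ := hx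
    constructor
    · obtain ⟨t, ht⟩ := nonempty_of_measure_ne_zero hx1.ne'
      exact ⟨t, ht⟩
    · obtain ⟨t, ht⟩ := nonempty_of_measure_ne_zero hx2.ne'
      exact ⟨t, ht⟩
  · exfalso
    push_neg at hex
    have hsingle : ∀ (i : Fin (m + 1)) (t : ℝ),
        S =ᵐ[volume] (fun x => x + Pi.single i t) ⁻¹' S := by
      intro i t
      have hnull : volume ({y : Fin m → ℝ | 0 < volume (slS i S y)}
          ∩ {y | 0 < volume (slS i Sᶜ y)}) = 0 :=
        nonpos_iff_eq_zero.mp (hex i)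
      have hae := cyl_ae i S hS hnull
      have hqmp : Measure.QuasiMeasurePreserving
          (fun x : Fin (m + 1) → ℝ => x + Pi.single i t) volume volume :=
        (measurePreserving_add_right (volume : Measure (Fin (m + 1) → ℝ)) (Pi.single i t)).quasiMeasurePreserving
      refine hae.trans ?_
      have h2' := hqmp.preimage_ae_eq hae.symm
      rwa [cyl_invariant i t {y : Fin m → ℝ | volume (slS i Sᶜ y) = 0}] at h2'
    exact final_contradiction S hS h1 h2 (trans_all S hsingle)
end
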